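/- Let (Ω, P) be a probability space, Q a measurable space of prompts, S : Ω → Q a random prompt, and W, W' : Ω → ℝ uniformly distributed on [0,1], with S, W, W' mutually independent. Let p, q : Q → ℝ be measurable with 0 < p(s) < 1 and 0 < q(s) < 1 for all s ∈ Q. Define the {0,1}-valued scores X = 1{W ≤ p(S)}, Y = 1{W ≤ q(S)} (coupled generation: shared noise W) and Y' = 1{W' ≤ q(S)} (independent generation: fresh noise W'). Then Var(X − Y') > Var(X − Y). -/

import Mathlib

open MeasureTheory ProbabilityTheory

private lemma unif_interval_prob : IsProbabilityMeasure (volume.restrict (Set.Icc (0:ℝ) 1)) := by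
  constructor
  rw [Measure.restrict_apply_univ, Real.volume_Icc]
  norm_num

private lemma unif_integral_if {c : ℝ} (h0 : 0 ≤ c) (h1 : c ≤ 1) :
    ∫ w, (if w ≤ c then (1:ℝ) else 0) ∂(volume.restrict (Set.Icc (0:ℝ) 1)) = c := by
  have : (fun w => if w ≤ c then (1:ℝ) else 0)
      = Set.indicator (Set.Iic c) (fun _ => (1:ℝ)) := by
    ext w; simp [Set.indicator_apply, Set.mem_Iic]
  rw [this, integral_indicator_const (1:ℝ) measurableSet_Iic]
  rw [measureReal_def, Measure.restrict_apply measurableSet_Iic]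
  have : Set.Iic c ∩ Set.Icc (0:ℝ) 1 = Set.Icc 0 c := by
    ext w; simp only [Set.mem_inter_iff, Set.mem_Iic, Set.mem_Icc]
    constructor
    · rintro ⟨h, h2, _⟩; exact ⟨h2, h⟩
    · rintro ⟨h2, h⟩; exact ⟨h, h2, h.trans h1⟩
  rw [this, Real.volume_Icc, smul_eq_mul, mul_one, ENNReal.toReal_ofReal (by linarith), sub_zero]

private lemma exp_comp {Ω β Q' : Type*} [MeasurableSpace Ω] [MeasurableSpace β]
    [MeasurableSpace Q'] (P : Measure Ω) [IsProbabilityMeasure P]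
    (S : Ω → Q') (T : Ω → β) (hS : Measurable S) (hT : Measurable T)
    (κ : Measure β) [IsProbabilityMeasure κ]
    (hmap : P.map (fun ω => (S ω, T ω)) = (P.map S).prod κ)
    (F : Q' × β → ℝ) (hF : Measurable F) (hbd : ∀ x, |F x| ≤ 1) :
    ∫ ω, F (S ω, T ω) ∂P = ∫ s, ∫ t, F (s, t) ∂κ ∂(P.map S) := by
  have hprob : IsProbabilityMeasure (P.map S) := Measure.isProbabilityMeasure_map hS.aemeasurable
  have hint : Integrable F ((P.map S).prod κ) :=
    (integrable_const (1:ℝ)).mono' hF.aestronglyMeasurable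
      (Filter.Eventually.of_forall fun x => by simpa using hbd x)
  calc ∫ ω, F (S ω, T ω) ∂P
      = ∫ x, F x ∂(P.map (fun ω => (S ω, T ω))) := by
        rw [integral_map (hS.prodMk hT).aemeasurable hF.aestronglyMeasurable]
    _ = ∫ x, F x ∂((P.map S).prod κ) := by rw [hmap]
    _ = ∫ s, ∫ t, F (s, t) ∂κ ∂(P.map S) := integral_prod F hint

theorem variance_coupled_lt_variance_independent_two_token
    {Ω : Type*} [MeasurableSpace Ω] (P : Measure Ω) [IsProbabilityMeasure P]
    {Q : Type*} [MeasurableSpace Q]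
    (S : Ω → Q) (W W' : Ω → ℝ)
    (hS : Measurable S) (hW : Measurable W) (hW' : Measurable W')
    (hWunif : P.map W = volume.restrict (Set.Icc (0:ℝ) 1))
    (hW'unif : P.map W' = volume.restrict (Set.Icc (0:ℝ) 1))
    -- mutual independence of `S`, `W`, `W'`
    (hWW' : IndepFun W W' P)
    (hS_WW' : IndepFun S (fun ω => (W ω, W' ω)) P)
    (p q : Q → ℝ) (hp : Measurable p) (hq : Measurable q)
    (hp01 : ∀ s, p s ∈ Set.Ioo (0:ℝ) 1) (hq01 : ∀ s, q s ∈ Set.Ioo (0:ℝ) 1)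
    (X Y Y' : Ω → ℝ)
    (hX : X = fun ω => if W ω ≤ p (S ω) then 1 else 0)
    (hY : Y = fun ω => if W ω ≤ q (S ω) then 1 else 0)
    (hY' : Y' = fun ω => if W' ω ≤ q (S ω) then 1 else 0) :
    variance (fun ω => X ω - Y ω) P < variance (fun ω => X ω - Y' ω) P := by
  set ν : Measure ℝ := volume.restrict (Set.Icc (0:ℝ) 1) with hν
  have hνprob : IsProbabilityMeasure ν := unif_interval_prob
  set μ : Measure Q := P.map S with hμ
  have hμprob : IsProbabilityMeasure μ := Measure.isProbabilityMeasure_map hS.aemeasurable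
  -- laws of pairs
  have hindSW : IndepFun S W P := hS_WW'.comp measurable_id measurable_fst
  have hindSW' : IndepFun S W' P := hS_WW'.comp measurable_id measurable_snd
  have hmapSW : P.map (fun ω => (S ω, W ω)) = μ.prod ν := by
    rw [(indepFun_iff_map_prod_eq_prod_map_map hS.aemeasurable hW.aemeasurable).mp hindSW,
      hWunif]
  have hmapSW' : P.map (fun ω => (S ω, W' ω)) = μ.prod ν := by
    rw [(indepFun_iff_map_prod_eq_prod_map_map hS.aemeasurable hW'.aemeasurable).mp hindSW',
      hW'unif]
  have hmapWW' : P.map (fun ω => (W ω, W' ω)) = ν.prod ν := by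
    rw [(indepFun_iff_map_prod_eq_prod_map_map hW.aemeasurable hW'.aemeasurable).mp hWW',
      hWunif, hW'unif]
  have hmapTriple : P.map (fun ω => (S ω, (W ω, W' ω))) = μ.prod (ν.prod ν) := by
    rw [(indepFun_iff_map_prod_eq_prod_map_map hS.aemeasurable
      (hW.prodMk hW').aemeasurable).mp hS_WW', hmapWW']
  -- expectations
  have hEX : ∫ ω, X ω ∂P = ∫ s, p s ∂μ := by
    have hF : Measurable (fun x : Q × ℝ => if x.2 ≤ p x.1 then (1:ℝ) else 0) :=
      Measurable.ite (measurableSet_le measurable_snd (hp.comp measurable_fst))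
        measurable_const measurable_const
    have := exp_comp P S W hS hW ν hmapSW _ hF
      (fun x => by split <;> norm_num)
    rw [hX]
    rw [this]
    refine integral_congr_ae (Filter.Eventually.of_forall fun s => ?_)
    exact unif_integral_if (hp01 s).1.le (hp01 s).2.le
  have hEY : ∫ ω, Y ω ∂P = ∫ s, q s ∂μ := by
    have hF : Measurable (fun x : Q × ℝ => if x.2 ≤ q x.1 then (1:ℝ) else 0) :=
      Measurable.ite (measurableSet_le measurable_snd (hq.comp measurable_fst))
        measurable_const measurable_const
    have := exp_comp P S W hS hW ν hmapSW _ hF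
      (fun x => by split <;> norm_num)
    rw [hY, this]
    refine integral_congr_ae (Filter.Eventually.of_forall fun s => ?_)
    exact unif_integral_if (hq01 s).1.le (hq01 s).2.le
  have hEY' : ∫ ω, Y' ω ∂P = ∫ s, q s ∂μ := by
    have hF : Measurable (fun x : Q × ℝ => if x.2 ≤ q x.1 then (1:ℝ) else 0) :=
      Measurable.ite (measurableSet_le measurable_snd (hq.comp measurable_fst))
        measurable_const measurable_const
    have := exp_comp P S W' hS hW' ν hmapSW' _ hF
      (fun x => by split <;> norm_num)
    rw [hY', this]
    refine integral_congr_ae (Filter.Eventually.of_forall fun s => ?_)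
    exact unif_integral_if (hq01 s).1.le (hq01 s).2.le
  have hEXY : ∫ ω, X ω * Y ω ∂P = ∫ s, min (p s) (q s) ∂μ := by
    have hF : Measurable (fun x : Q × ℝ => if x.2 ≤ min (p x.1) (q x.1) then (1:ℝ) else 0) :=
      Measurable.ite (measurableSet_le measurable_snd
        ((hp.comp measurable_fst).min (hq.comp measurable_fst)))
        measurable_const measurable_const
    have key := exp_comp P S W hS hW ν hmapSW _ hF
      (fun x => by split <;> norm_num)
    have hptwise : (fun ω => X ω * Y ω)
        = fun ω => if W ω ≤ min (p (S ω)) (q (S ω)) then (1:ℝ) else 0 := by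
      funext ω; rw [hX, hY]; dsimp only
      by_cases h1 : W ω ≤ p (S ω) <;> by_cases h2 : W ω ≤ q (S ω) <;>
        simp [le_min_iff, h1, h2]
    calc ∫ ω, X ω * Y ω ∂P
        = ∫ ω, (if W ω ≤ min (p (S ω)) (q (S ω)) then (1:ℝ) else 0) ∂P := by rw [hptwise]
      _ = ∫ s, ∫ t, (if t ≤ min (p s) (q s) then (1:ℝ) else 0) ∂ν ∂μ := key
      _ = ∫ s, min (p s) (q s) ∂μ := by
          refine integral_congr_ae (Filter.Eventually.of_forall fun s => ?_)
          exact unif_integral_if (le_min (hp01 s).1.le (hq01 s).1.le)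
            (min_le_of_left_le (hp01 s).2.le)
  have hEXY' : ∫ ω, X ω * Y' ω ∂P = ∫ s, p s * q s ∂μ := by
    have hF : Measurable (fun x : Q × (ℝ × ℝ) =>
        (if x.2.1 ≤ p x.1 then (1:ℝ) else 0) * (if x.2.2 ≤ q x.1 then (1:ℝ) else 0)) := by
      refine Measurable.mul ?_ ?_
      · exact Measurable.ite (measurableSet_le (measurable_fst.comp measurable_snd)
          (hp.comp measurable_fst)) measurable_const measurable_const
      · exact Measurable.ite (measurableSet_le (measurable_snd.comp measurable_snd)
          (hq.comp measurable_fst)) measurable_const measurable_const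
    have key := exp_comp P S (fun ω => (W ω, W' ω)) hS (hW.prodMk hW') (ν.prod ν)
      hmapTriple _ hF
      (fun x => by split <;> split <;> norm_num)
    rw [hX, hY']
    calc ∫ ω, (if W ω ≤ p (S ω) then (1:ℝ) else 0) * (if W' ω ≤ q (S ω) then (1:ℝ) else 0) ∂P
        = ∫ s, ∫ t : ℝ × ℝ, (if t.1 ≤ p s then (1:ℝ) else 0) * (if t.2 ≤ q s then (1:ℝ) else 0)
            ∂(ν.prod ν) ∂μ := key
      _ = ∫ s, p s * q s ∂μ := by
          refine integral_congr_ae (Filter.Eventually.of_forall fun s => ?_)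
          dsimp only
          rw [integral_prod_mul (fun w => if w ≤ p s then (1:ℝ) else 0)
            (fun w => if w ≤ q s then (1:ℝ) else 0),
            unif_integral_if (hp01 s).1.le (hp01 s).2.le,
            unif_integral_if (hq01 s).1.le (hq01 s).2.le]
  -- measurability and boundedness of X, Y, Y'
  have hXm : Measurable X := by
    rw [hX]; exact Measurable.ite (measurableSet_le hW (hp.comp hS))
      measurable_const measurable_const
  have hYm : Measurable Y := by
    rw [hY]; exact Measurable.ite (measurableSet_le hW (hq.comp hS))
      measurable_const measurable_const
  have hY'm : Measurable Y' := by
    rw [hY']; exact Measurable.ite (measurableSet_le hW' (hq.comp hS))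
      measurable_const measurable_const
  have hXbd : ∀ ω, |X ω| ≤ 1 := by intro ω; rw [hX]; dsimp only; split <;> norm_num
  have hYbd : ∀ ω, |Y ω| ≤ 1 := by intro ω; rw [hY]; dsimp only; split <;> norm_num
  have hY'bd : ∀ ω, |Y' ω| ≤ 1 := by intro ω; rw [hY']; dsimp only; split <;> norm_num
  have hintX : Integrable X P := (integrable_const (1:ℝ)).mono' hXm.aestronglyMeasurable
    (Filter.Eventually.of_forall fun ω => by simpa using hXbd ω)
  have hintY : Integrable Y P := (integrable_const (1:ℝ)).mono' hYm.aestronglyMeasurable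
    (Filter.Eventually.of_forall fun ω => by simpa using hYbd ω)
  have hintY' : Integrable Y' P := (integrable_const (1:ℝ)).mono' hY'm.aestronglyMeasurable
    (Filter.Eventually.of_forall fun ω => by simpa using hY'bd ω)
  have hintXY : Integrable (fun ω => X ω * Y ω) P :=
    (integrable_const (1:ℝ)).mono' (hXm.mul hYm).aestronglyMeasurable
      (Filter.Eventually.of_forall fun ω => by
        simp only [norm_mul, Real.norm_eq_abs]
        calc |X ω| * |Y ω| ≤ 1 * 1 := by
              exact mul_le_mul (hXbd ω) (hYbd ω) (abs_nonneg _) zero_le_one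
          _ = 1 := one_mul 1)
  have hintXY' : Integrable (fun ω => X ω * Y' ω) P :=
    (integrable_const (1:ℝ)).mono' (hXm.mul hY'm).aestronglyMeasurable
      (Filter.Eventually.of_forall fun ω => by
        simp only [norm_mul, Real.norm_eq_abs]
        calc |X ω| * |Y' ω| ≤ 1 * 1 := by
              exact mul_le_mul (hXbd ω) (hY'bd ω) (abs_nonneg _) zero_le_one
          _ = 1 := one_mul 1)
  -- Memℒp 2
  have hmemXY : MemLp (fun ω => X ω - Y ω) 2 P := by
    refine MemLp.mono_exponent ?_ le_top
    refine memLp_top_of_bound (hXm.sub hYm).aestronglyMeasurable 2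
      (Filter.Eventually.of_forall fun ω => ?_)
    calc ‖X ω - Y ω‖ ≤ |X ω| + |Y ω| := abs_sub _ _
      _ ≤ 2 := by linarith [hXbd ω, hYbd ω]
  have hmemXY' : MemLp (fun ω => X ω - Y' ω) 2 P := by
    refine MemLp.mono_exponent ?_ le_top
    refine memLp_top_of_bound (hXm.sub hY'm).aestronglyMeasurable 2
      (Filter.Eventually.of_forall fun ω => ?_)
    calc ‖X ω - Y' ω‖ ≤ |X ω| + |Y' ω| := abs_sub _ _
      _ ≤ 2 := by linarith [hXbd ω, hY'bd ω]
  -- second moments: (X - Z)^2 = X + Z - 2 X Z pointwise, for Z ∈ {Y, Y'}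
  have hsqXY : ∀ ω, (X ω - Y ω)^2 = X ω + Y ω - 2 * (X ω * Y ω) := by
    intro ω; rw [hX, hY]; dsimp only; split <;> split <;> ring
  have hsqXY' : ∀ ω, (X ω - Y' ω)^2 = X ω + Y' ω - 2 * (X ω * Y' ω) := by
    intro ω; rw [hX, hY']; dsimp only; split <;> split <;> ring
  -- moments
  have hm2XY : ∫ ω, (X ω - Y ω)^2 ∂P
      = ∫ s, p s ∂μ + ∫ s, q s ∂μ - 2 * ∫ s, min (p s) (q s) ∂μ := by
    rw [show (fun ω => (X ω - Y ω)^2) = fun ω => X ω + Y ω - 2 * (X ω * Y ω) from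
      funext hsqXY]
    have h1 : Integrable (fun ω => X ω + Y ω) P := hintX.add hintY
    have h2 : Integrable (fun ω => 2 * (X ω * Y ω)) P := hintXY.const_mul 2
    rw [integral_sub h1 h2, integral_add hintX hintY, integral_const_mul 2 _, hEX, hEY, hEXY]
  have hm2XY' : ∫ ω, (X ω - Y' ω)^2 ∂P
      = ∫ s, p s ∂μ + ∫ s, q s ∂μ - 2 * ∫ s, p s * q s ∂μ := by
    rw [show (fun ω => (X ω - Y' ω)^2) = fun ω => X ω + Y' ω - 2 * (X ω * Y' ω) from
      funext hsqXY']
    have h1 : Integrable (fun ω => X ω + Y' ω) P := hintX.add hintY'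
    have h2 : Integrable (fun ω => 2 * (X ω * Y' ω)) P := hintXY'.const_mul 2
    rw [integral_sub h1 h2, integral_add hintX hintY', integral_const_mul 2 _, hEX, hEY', hEXY']
  have hm1XY : ∫ ω, (X ω - Y ω) ∂P = ∫ s, p s ∂μ - ∫ s, q s ∂μ := by
    rw [integral_sub hintX hintY, hEX, hEY]
  have hm1XY' : ∫ ω, (X ω - Y' ω) ∂P = ∫ s, p s ∂μ - ∫ s, q s ∂μ := by
    rw [integral_sub hintX hintY', hEX, hEY']
  -- key strict inequality
  have hkey : ∫ s, p s * q s ∂μ < ∫ s, min (p s) (q s) ∂μ := by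
    have hintpq : Integrable (fun s => p s * q s) μ :=
      (integrable_const (1:ℝ)).mono' (hp.mul hq).aestronglyMeasurable
        (Filter.Eventually.of_forall fun s => by
          have h1 := hp01 s; have h2 := hq01 s
          simp only [Real.norm_eq_abs, abs_mul]
          rw [abs_of_pos h1.1, abs_of_pos h2.1]
          nlinarith [h1.1, h1.2, h2.1, h2.2])
    have hintmin : Integrable (fun s => min (p s) (q s)) μ :=
      (integrable_const (1:ℝ)).mono' (hp.min hq).aestronglyMeasurable
        (Filter.Eventually.of_forall fun s => by
          have h1 := hp01 s; have h2 := hq01 s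
          simp only [Real.norm_eq_abs]
          rw [abs_of_pos (lt_min h1.1 h2.1)]
          exact min_le_of_left_le h1.2.le)
    have hpos : ∀ s, 0 < min (p s) (q s) - p s * q s := by
      intro s
      have h1 := hp01 s; have h2 := hq01 s
      rcases le_total (p s) (q s) with h | h
      · rw [min_eq_left h]; nlinarith [h1.1, h1.2, h2.1, h2.2]
      · rw [min_eq_right h]; nlinarith [h1.1, h1.2, h2.1, h2.2]
    have : 0 < ∫ s, (min (p s) (q s) - p s * q s) ∂μ := by
      rw [integral_pos_iff_support_of_nonneg (fun s => (hpos s).le) (hintmin.sub hintpq)]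
      have : Function.support (fun s => min (p s) (q s) - p s * q s) = Set.univ := by
        ext s; simp [Function.mem_support, (hpos s).ne']
      rw [this]
      simp [hμprob.measure_univ]
    rw [integral_sub hintmin hintpq] at this
    linarith
  -- conclude
  rw [variance_eq_sub hmemXY, variance_eq_sub hmemXY']
  have e1 : (fun ω => X ω - Y ω)^2 = fun ω => (X ω - Y ω)^2 := by
    funext ω; simp [Pi.pow_apply]
  have e2 : (fun ω => X ω - Y' ω)^2 = fun ω => (X ω - Y' ω)^2 := by
    funext ω; simp [Pi.pow_apply]
  simp only [e1, e2]
  rw [hm2XY, hm2XY', hm1XY, hm1XY']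
  linarith
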